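/- Let c > 0, s ≥ 0, z ≥ 0 with s + z > 0, and let t > 0. Then the inequality c · (s + z t / 3) ≤ t² / 2 holds if and only if (c z / 3) + √( 2 c s + c² z² / 9 ) ≤ t. Consequently, for τ ∈ (0,1) with c = ln(1/τ), one has exp( −(t²/2) / (s + z t/3) ) ≤ τ if and only if (c z / 3) + √( 2 c s + c² z² / 9 ) ≤ t. -/
import Mathlib


open Real

/-- Algebraic core of Proposition 7 of the paper (Bernstein constraint as a
second-order cone constraint): for `c > 0`, `s, z ≥ 0` with `s + z > 0` and `t > 0`,
`c(s + zt/3) ≤ t²/2 ↔ cz/3 + √(2cs + c²z²/9) ≤ t`; consequently, for `τ ∈ (0,1)`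
and `c = ln(1/τ)`, `exp(−(t²/2)/(s + zt/3)) ≤ τ ↔ cz/3 + √(2cs + c²z²/9) ≤ t`. -/
theorem bernstein_socp_equivalence
    (c s z t : ℝ) (hc : 0 < c) (hs : 0 ≤ s) (hz : 0 ≤ z) (hsz : 0 < s + z)
    (ht : 0 < t) :
    (c * (s + z * t / 3) ≤ t ^ 2 / 2 ↔
      c * z / 3 + Real.sqrt (2 * c * s + c ^ 2 * z ^ 2 / 9) ≤ t) ∧
    (∀ τ : ℝ, τ ∈ Set.Ioo (0 : ℝ) 1 → c = Real.log (1 / τ) →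
      (Real.exp (-(t ^ 2 / 2) / (s + z * t / 3)) ≤ τ ↔
        c * z / 3 + Real.sqrt (2 * c * s + c ^ 2 * z ^ 2 / 9) ≤ t)) := by
  set w := Real.sqrt (2 * c * s + c ^ 2 * z ^ 2 / 9) with hw
  have hD : 0 ≤ 2 * c * s + c ^ 2 * z ^ 2 / 9 := by positivity
  have hw2 : w ^ 2 = 2 * c * s + c ^ 2 * z ^ 2 / 9 := Real.sq_sqrt hD
  have hw0 : 0 ≤ w := Real.sqrt_nonneg _
  have hwa : c * z / 3 ≤ w := by
    rw [hw]
    rw [show c * z / 3 = Real.sqrt ((c * z / 3) ^ 2) by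
      rw [Real.sqrt_sq (by positivity)]]
    apply Real.sqrt_le_sqrt
    nlinarith [mul_nonneg hc.le hs]
  have hq : 0 < s + z * t / 3 := by
    rcases hs.lt_or_eq with h | h
    · positivity
    · have hz' : 0 < z := by linarith
      have := mul_pos hz' ht
      linarith
  have hmain : c * (s + z * t / 3) ≤ t ^ 2 / 2 ↔ c * z / 3 + w ≤ t := by
    constructor
    · intro h
      by_contra h'
      push_neg at h'
      nlinarith [mul_pos (by linarith : (0:ℝ) < c * z / 3 + w - t)
        (by linarith : (0:ℝ) < w - c * z / 3 + t)]
    · intro h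
      have h1 : w ≤ t - c * z / 3 := by linarith
      nlinarith [mul_le_mul h1 h1 hw0 (by linarith)]
  refine ⟨hmain, ?_⟩
  intro τ hτ hce
  have hτ0 := hτ.1
  have hcτ : Real.log τ = -c := by
    rw [hce, one_div, Real.log_inv, neg_neg]
  rw [← Real.le_log_iff_exp_le hτ0, hcτ, div_le_iff₀ hq]
  constructor
  · intro h
    exact hmain.1 (by nlinarith)
  · intro h
    have := hmain.2 h
    nlinarith
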